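/- Let B be a skew brace such that B³ = 0, let Z_n(B²,+) be the n-th term of the upper central series of (B²,+), and set S_n = {a ∈ B² : a∗b ∈ Z_n(B²,+) for all b ∈ B}. Then S_n is an ideal of B for every n ≥ 0. -/

import Mathlib

/-- A (left) skew brace: a set with two group structures `(B,+)` and `(B,·)`
satisfying `a·(b+c) = a·b - a + a·c`. -/
class SkewBrace (B : Type*) extends AddGroup B, Group B where
  mul_add_compat : ∀ a b c : B, a * (b + c) = a * b - a + a * c

namespace SkewBrace

variable {B : Type*} [SkewBrace B]

/-- The star product `a ∗ b = -a + a·b - b`. -/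
def star (a b : B) : B := -a + a * b - b

/-- For subsets `X, Y ⊆ B`, `X ∗ Y` is the additive subgroup generated by
all `x ∗ y` with `x ∈ X`, `y ∈ Y`. -/
def starSet (X Y : Set B) : AddSubgroup B :=
  AddSubgroup.closure (Set.image2 star X Y)

/-- The left series, indexed so that `leftSeries B n = B^{n+1}`:
`leftSeries B 0 = B¹ = B` and `leftSeries B (n+1) = B ∗ leftSeries B n`. -/
def leftSeries (B : Type*) [SkewBrace B] : ℕ → AddSubgroup B
  | 0 => ⊤
  | n + 1 => starSet Set.univ (leftSeries B n)

/-- The right series, indexed so that `rightSeries B n = B^{(n+1)}`: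
`rightSeries B 0 = B^{(1)} = B` and `rightSeries B (n+1) = (rightSeries B n) ∗ B`. -/
def rightSeries (B : Type*) [SkewBrace B] : ℕ → AddSubgroup B
  | 0 => ⊤
  | n + 1 => starSet (rightSeries B n : Set B) Set.univ

end SkewBrace

namespace SkewBrace

/-- The `n`-th term of the upper central series of the additive group `(B²,+)`,
viewed as a subset of `B`. -/
def upperCentralSet (B : Type*) [SkewBrace B] (n : ℕ) : Set B :=
  {x : B | ∃ hx : x ∈ leftSeries B 1,
    Multiplicative.ofAdd (⟨x, hx⟩ : ↥(leftSeries B 1)) ∈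
      upperCentralSeries (Multiplicative ↥(leftSeries B 1)) n}

/-- `S_n = {a ∈ B² : a ∗ b ∈ Z_n(B²,+) for all b ∈ B}`. -/
def Sset (B : Type*) [SkewBrace B] (n : ℕ) : Set B :=
  {a : B | a ∈ leftSeries B 1 ∧ ∀ b : B, star a b ∈ upperCentralSet B n}

end SkewBrace

namespace SkewBrace

variable {B : Type*} [SkewBrace B]

/-- An ideal of a skew brace `B`: a normal subgroup of `(B,+)` with
`I ∗ B ⊆ I` and `B ∗ I ⊆ I`. -/
def IsIdeal (I : AddSubgroup B) : Prop :=
  (∀ i ∈ I, ∀ b : B, b + i - b ∈ I) ∧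
  (∀ i ∈ I, ∀ b : B, star i b ∈ I) ∧
  (∀ i ∈ I, ∀ b : B, star b i ∈ I)

end SkewBrace

namespace SBAux
open SkewBrace (starSet leftSeries Sset upperCentralSet IsIdeal)

variable {B : Type*} [SkewBrace B]

lemma mul_add' (a b c : B) : a * (b + c) = a * b - a + a * c := SkewBrace.mul_add_compat a b c

lemma mul_zero' (a : B) : a * (0:B) = a := by
  have h := mul_add' a 0 0
  rw [add_zero] at h
  have h2 : a * 0 - a + a * 0 = 0 + a * 0 := by rw [← h, zero_add]
  exact sub_eq_zero.mp (add_right_cancel h2)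

lemma one_eq_zero : (1:B) = 0 := by
  have := mul_zero' (1:B)
  rw [one_mul] at this
  exact this.symm

def lam (a b : B) : B := -a + a * b

lemma lam_add (a b c : B) : lam a (b + c) = lam a b + lam a c := by
  simp only [lam, mul_add', sub_eq_add_neg, add_assoc]

lemma lam_zero (a : B) : lam a 0 = 0 := by simp [lam, mul_zero']

lemma lam_neg (a b : B) : lam a (-b) = - lam a b := by
  have h := lam_add a b (-b)
  rw [add_neg_cancel, lam_zero] at h
  exact eq_neg_of_add_eq_zero_right h.symm

lemma lam_sub (a b c : B) : lam a (b - c) = lam a b - lam a c := by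
  rw [sub_eq_add_neg, lam_add, lam_neg, sub_eq_add_neg]

lemma mul_neg' (a b : B) : a * (-b) = a - a * b + a := by
  have := lam_neg a b
  simp only [lam] at this
  rw [neg_add_rev, neg_neg] at this
  have h2 := congrArg (fun t => a + t) this
  simp only [add_neg_cancel_left] at h2
  rw [h2, sub_eq_add_neg, add_assoc]

lemma lam_mul (a b c : B) : lam (a * b) c = lam a (lam b c) := by
  simp only [lam]
  rw [mul_add' a (-b) (b*c), mul_neg']
  rw [mul_assoc]
  simp only [sub_eq_add_neg, add_assoc]
  simp [← add_assoc]

lemma star_eq (a b : B) : SkewBrace.star a b = lam a b - b := rfl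

lemma star_mul (a b c : B) : SkewBrace.star (a * b) c =
    SkewBrace.star a (SkewBrace.star b c) + SkewBrace.star b c + SkewBrace.star a c := by
  simp only [star_eq]
  rw [sub_add_cancel]
  rw [lam_sub, lam_mul]
  simp only [sub_eq_add_neg, add_assoc]
  congr 1
  rw [neg_add_cancel_left]

lemma star_zero (x : B) : SkewBrace.star (0:B) x = 0 := by
  have : (0:B) * x = x := by rw [← one_eq_zero, one_mul]
  simp [SkewBrace.star, this]

lemma star_mem_sq (x y : B) : SkewBrace.star x y ∈ leftSeries B 1 := by
  show _ ∈ starSet Set.univ ((⊤ : AddSubgroup B) : Set B)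
  exact AddSubgroup.subset_closure
    (Set.mem_image2_of_mem (Set.mem_univ x) (by simp))

lemma mul_eq_add_of_star_zero {u v : B} (h : SkewBrace.star u v = 0) : u * v = u + v := by
  simp only [SkewBrace.star] at h
  have h2 : -u + u * v = v := sub_eq_zero.mp h
  have := congrArg (fun t => u + t) h2
  simpa only [add_neg_cancel_left] using this

lemma conj_star (u y b : B) : b + SkewBrace.star u y - b =
    -(SkewBrace.star u b) + SkewBrace.star u (b + y) := by
  simp only [star_eq, lam_add, sub_eq_add_neg, neg_add_rev, neg_neg, add_assoc,
    neg_add_cancel_left]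

lemma sq_normal {g : B} (hg : g ∈ leftSeries B 1) (b : B) : b + g - b ∈ leftSeries B 1 := by
  have hg' : g ∈ AddSubgroup.closure
      (Set.image2 SkewBrace.star Set.univ ((⊤ : AddSubgroup B) : Set B)) := hg
  clear hg
  induction hg' using AddSubgroup.closure_induction with
  | mem x hx =>
    obtain ⟨u, -, y, -, rfl⟩ := hx
    rw [conj_star]
    exact add_mem (neg_mem (star_mem_sq u b)) (star_mem_sq u (b + y))
  | zero => simpa using zero_mem (leftSeries B 1)
  | add x y hx hy px py =>
    have : b + (x + y) - b = (b + x - b) + (b + y - b) := by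
      simp [sub_eq_add_neg, add_assoc]
    rw [this]; exact add_mem px py
  | neg x hx px =>
    have : b + (-x) - b = -(b + x - b) := by
      simp [sub_eq_add_neg, add_assoc]
    rw [this]; exact neg_mem px

section WithH3

variable (h3 : leftSeries B 2 = ⊥)
include h3

lemma star_right_zero {c : B} (hc : c ∈ leftSeries B 1) (u : B) : SkewBrace.star u c = 0 := by
  have h : SkewBrace.star u c ∈ leftSeries B 2 := by
    show _ ∈ starSet Set.univ ((leftSeries B 1 : AddSubgroup B) : Set B)
    exact AddSubgroup.subset_closure (Set.mem_image2_of_mem (Set.mem_univ u) hc)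
  rw [h3] at h
  exact AddSubgroup.mem_bot.mp h

lemma mul_sq {c : B} (hc : c ∈ leftSeries B 1) (u : B) : u * c = u + c :=
  mul_eq_add_of_star_zero (star_right_zero h3 hc u)

lemma star_comm_sq {g : B} (hg : g ∈ leftSeries B 1) (b x : B) :
    SkewBrace.star b x + g = g + SkewBrace.star b x := by
  have hg2 : -x + g + x ∈ leftSeries B 1 := by
    have := sq_normal hg (-x); rwa [sub_neg_eq_add] at this
  have k1 : b * (x + (-x + g + x)) = b * x + (-x + g + x) := by
    rw [mul_add', mul_sq h3 hg2]
    simp [sub_eq_add_neg, add_assoc]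
  have e2 : x + (-x + g + x) = g + x := by simp [add_assoc]
  have E : b * x + (-x + g + x) = b + g + -b + b * x := by
    rw [← k1, e2, mul_add', mul_sq h3 hg b]
    simp [sub_eq_add_neg, add_assoc]
  simp only [SkewBrace.star, sub_eq_add_neg]
  calc -b + b * x + -x + g
      = -b + ((b * x + (-x + g + x)) + -x) := by simp [add_assoc]
    _ = -b + ((b + g + -b + b * x) + -x) := by rw [E]
    _ = g + (-b + b * x + -x) := by simp [add_assoc]

lemma sq_comm {g h : B} (hg : g ∈ leftSeries B 1) (hh : h ∈ leftSeries B 1) :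
    g + h = h + g := by
  have hg' : g ∈ AddSubgroup.closure
      (Set.image2 SkewBrace.star Set.univ ((⊤ : AddSubgroup B) : Set B)) := hg
  clear hg
  induction hg' using AddSubgroup.closure_induction with
  | mem x hx =>
    obtain ⟨u, -, y, -, rfl⟩ := hx
    exact star_comm_sq h3 hh u y
  | zero => simp
  | add x y hx hy px py =>
    rw [add_assoc, py, ← add_assoc, px, add_assoc]
  | neg x hx px =>
    have h1 : -x + (x + h + -x) = -x + (h + x + -x) := by rw [px]
    have h2 : h + -x = -x + h := by simpa [add_assoc] using h1
    exact h2.symm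

lemma star_add_left {c : B} (hc : c ∈ leftSeries B 1) (u x : B) :
    SkewBrace.star (u + c) x = SkewBrace.star c x + SkewBrace.star u x := by
  rw [← mul_sq h3 hc u, star_mul, star_right_zero h3 (star_mem_sq c x) u, zero_add]

lemma star_neg {a : B} (ha : a ∈ leftSeries B 1) (x : B) :
    SkewBrace.star (-a) x = -(SkewBrace.star a x) := by
  have h := star_add_left h3 ha (-a) x
  rw [neg_add_cancel, star_zero] at h
  exact eq_neg_of_add_eq_zero_right h.symm

lemma star_inv_add (u x : B) :
    SkewBrace.star u⁻¹ x + SkewBrace.star u x = 0 := by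
  have h := star_mul u u⁻¹ x
  rw [mul_inv_cancel, one_eq_zero, star_zero,
    star_right_zero h3 (star_mem_sq u⁻¹ x) u, zero_add] at h
  exact h.symm

end WithH3

/-- `S_0` as an additive subgroup. -/
def S0 (B : Type*) [SkewBrace B] (h3 : leftSeries B 2 = ⊥) : AddSubgroup B where
  carrier := {a : B | a ∈ leftSeries B 1 ∧ ∀ b : B, SkewBrace.star a b = 0}
  zero_mem' := ⟨zero_mem _, fun b => star_zero b⟩
  add_mem' := by
    rintro a c ⟨ha, ha'⟩ ⟨hc, hc'⟩
    exact ⟨add_mem ha hc, fun b => by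
      rw [star_add_left h3 hc a b, ha' b, hc' b, add_zero]⟩
  neg_mem' := by
    rintro a ⟨ha, ha'⟩
    exact ⟨neg_mem ha, fun b => by rw [star_neg h3 ha b, ha' b, neg_zero]⟩

lemma mem_S0 {h3 : leftSeries B 2 = ⊥} {a : B} :
    a ∈ S0 B h3 ↔ a ∈ leftSeries B 1 ∧ ∀ b : B, SkewBrace.star a b = 0 := Iff.rfl

variable (h3 : leftSeries B 2 = ⊥)

lemma mem_ucs0 (x : B) : x ∈ upperCentralSet B 0 ↔ x = 0 := by
  constructor
  · rintro ⟨hx, hmem⟩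
    unfold upperCentralSeries at hmem
    rw [upperCentralSeries_zero, Subgroup.mem_bot] at hmem
    have : (⟨x, hx⟩ : ↥(leftSeries B 1)) = 0 := hmem
    exact Subtype.ext_iff.mp this
  · rintro rfl
    refine ⟨zero_mem _, ?_⟩
    unfold upperCentralSeries
    rw [upperCentralSeries_zero, Subgroup.mem_bot]
    rfl

include h3 in
lemma mem_ucs_succ (m : ℕ) {x : B} (hx : x ∈ leftSeries B 1) :
    x ∈ upperCentralSet B (m + 1) := by
  refine ⟨hx, ?_⟩
  unfold upperCentralSeries
  rw [mem_upperCentralSeries_succ_iff]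
  intro y
  have hcomm : ∀ u v : Multiplicative ↥(leftSeries B 1), u * v = v * u := by
    intro u v
    have hc := sq_comm h3 (Multiplicative.toAdd u).2 (Multiplicative.toAdd v).2
    have h2 : (Multiplicative.toAdd u + Multiplicative.toAdd v : ↥(leftSeries B 1)) =
        Multiplicative.toAdd v + Multiplicative.toAdd u := Subtype.ext hc
    exact h2
  rw [commutatorElement_def]
  rw [hcomm _ y]
  have h1 : y * (Multiplicative.ofAdd (⟨x, hx⟩ : ↥(leftSeries B 1))) *
      (Multiplicative.ofAdd (⟨x, hx⟩ : ↥(leftSeries B 1)))⁻¹ * y⁻¹ = 1 := by group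
  rw [h1]
  exact one_mem _

end SBAux

open SkewBrace SBAux in
/-- If `B³ = 0`, then `S_n = {a ∈ B² : a ∗ b ∈ Z_n(B²,+) for all b ∈ B}` is an
ideal of `B` for every `n`. -/
theorem Sset_isIdeal (B : Type*) [SkewBrace B]
    (h3 : leftSeries B 2 = ⊥) :
    ∀ n : ℕ, ∃ S : AddSubgroup B, (S : Set B) = Sset B n ∧ IsIdeal S := by
  intro n
  match n with
  | 0 =>
    refine ⟨S0 B h3, ?_, ?_, ?_, ?_⟩
    · ext a
      simp only [SetLike.mem_coe, mem_S0, Sset, Set.mem_setOf_eq]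
      constructor
      · rintro ⟨ha, ha'⟩
        exact ⟨ha, fun b => (mem_ucs0 _).mpr (ha' b)⟩
      · rintro ⟨ha, ha'⟩
        exact ⟨ha, fun b => (mem_ucs0 _).mp (ha' b)⟩
    · rintro i ⟨hi, hi'⟩ b
      refine ⟨sq_normal hi b, fun x => ?_⟩
      have e1 : i * b⁻¹ = i + b⁻¹ := mul_eq_add_of_star_zero (hi' b⁻¹)
      have e2 : b * (i * b⁻¹) = b + i - b := by
        rw [e1, mul_add', mul_sq h3 hi, mul_inv_cancel, one_eq_zero, add_zero]
      have e3 : SkewBrace.star (b * (i * b⁻¹)) x = 0 := by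
        rw [star_mul b (i * b⁻¹) x, star_right_zero h3 (star_mem_sq _ x) b, zero_add,
          star_mul i b⁻¹ x, star_right_zero h3 (star_mem_sq b⁻¹ x) i, zero_add, hi' x,
          add_zero, star_inv_add h3]
      rw [← e2]
      exact e3
    · rintro i ⟨hi, hi'⟩ b
      rw [hi' b]
      exact zero_mem _
    · rintro i ⟨hi, hi'⟩ b
      rw [star_right_zero h3 hi b]
      exact zero_mem _
  | m + 1 =>
    refine ⟨leftSeries B 1, ?_, ?_, ?_, ?_⟩
    · ext a
      simp only [SetLike.mem_coe, Sset, Set.mem_setOf_eq]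
      constructor
      · intro ha
        exact ⟨ha, fun b => mem_ucs_succ h3 m (star_mem_sq a b)⟩
      · rintro ⟨ha, -⟩
        exact ha
    · intro i hi b
      exact sq_normal hi b
    · intro i hi b
      exact star_mem_sq i b
    · intro i hi b
      rw [star_right_zero h3 hi b]
      exact zero_mem _
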